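/- Every comodule over a coalgebra C over a field k is the directed union (filtered colimit) of its finite-dimensional subcomodules; consequently, the category of C-comodules is the ind-completion of the category of finite-dimensional C-comodules. -/

import Mathlib

/-!
Fundamental theorem of comodules (local finiteness): every comodule over a coalgebra `C`
over a field `k` is the directed union of its finite-dimensional subcomodules.
(The categorical consequence, that the comodule category is the ind-completion of the
finite-dimensional comodules, is expressed here by directedness and exhaustion.)
-/

open TensorProduct LinearMap

section Aux

variable {k : Type} [Field k] {C : Type} [AddCommGroup C] [Module k C]
  {ι : Type} [DecidableEq ι] (b : Module.Basis ι k C)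
  {X Y : Type} [AddCommGroup X] [Module k X] [AddCommGroup Y] [Module k Y]

/-- The identification `X ⊗ C ≃ (ι →₀ X)` coming from a basis of `C`. -/
noncomputable def auxE : X ⊗[k] C ≃ₗ[k] (ι →₀ X) :=
  (TensorProduct.congr (LinearEquiv.refl k X) b.repr).trans
    (TensorProduct.finsuppScalarRight k k X ι)

lemma auxE_tmul (x : X) (c : C) (j : ι) : auxE b (x ⊗ₜ[k] c) j = b.repr c j • x := by
  simp [auxE]

/-- The `j`-th component map `X ⊗ C → X`. -/
noncomputable def auxR (j : ι) : X ⊗[k] C →ₗ[k] X :=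
  (Finsupp.lapply j) ∘ₗ (auxE b).toLinearMap

lemma auxR_tmul (j : ι) (x : X) (c : C) : auxR b j (x ⊗ₜ[k] c) = b.repr c j • x :=
  auxE_tmul b x c j

lemma auxR_apply (j : ι) (x : X ⊗[k] C) : auxR b j x = auxE b x j := rfl

lemma auxE_symm_single (j : ι) (x : X) :
    (auxE b).symm (Finsupp.single j x) = x ⊗ₜ[k] b j := by
  apply (auxE b).injective
  rw [LinearEquiv.apply_symm_apply]
  ext i
  simp only [auxE_tmul]
  rcases eq_or_ne j i with rfl | h
  · simp
  · simp [Finsupp.single_apply, h]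

lemma auxDecomp (x : X ⊗[k] C) : x = (auxE b x).sum fun j y => y ⊗ₜ[k] b j := by
  conv_lhs => rw [← (auxE b).symm_apply_apply x, ← Finsupp.sum_single (auxE b x)]
  rw [map_finsuppSum]
  exact Finsupp.sum_congr fun j _ => auxE_symm_single b j _

lemma auxR_natural (f : X →ₗ[k] Y) (j : ι) (x : X ⊗[k] C) :
    auxR b j (rTensor C f x) = f (auxR b j x) := by
  have h : (auxR b j) ∘ₗ (rTensor C f) = f ∘ₗ auxR (X := X) b j := by
    ext x c
    simp [auxR_tmul]
  exact DFunLike.congr_fun h x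

lemma auxR_assoc (j : ι) (y : (X ⊗[k] C) ⊗[k] C) :
    lTensor X (auxR (X := C) b j) (TensorProduct.assoc k X C C y)
      = auxR (X := X ⊗[k] C) b j y := by
  have h : (lTensor X (auxR (X := C) b j)) ∘ₗ (TensorProduct.assoc k X C C).toLinearMap
      = auxR (X := X ⊗[k] C) b j := by
    apply TensorProduct.ext_threefold
    intro x c' c
    simp [auxR_tmul, tmul_smul]
  exact DFunLike.congr_fun h y

lemma auxMem (W : Submodule k X) (g : C →ₗ[k] C) (x : X ⊗[k] C)
    (hx : ∀ j ∈ (auxE b x).support, auxE b x j ∈ W) :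
    lTensor X g x ∈ LinearMap.range (rTensor C W.subtype) := by
  rw [auxDecomp b x, map_finsuppSum]
  apply Submodule.finsuppSum_mem
  intro j hj
  refine ⟨(⟨auxE b x j, hx j (Finsupp.mem_support_iff.mpr hj)⟩ : W) ⊗ₜ[k] g (b j), ?_⟩
  simp

lemma range_rTensor_mono {W W' : Submodule k X} (h : W ≤ W') :
    LinearMap.range (rTensor C W.subtype) ≤ LinearMap.range (rTensor C W'.subtype) := by
  rw [← Submodule.subtype_comp_inclusion W W' h, rTensor_comp]
  exact LinearMap.range_comp_le_range _ _

end Aux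

theorem stmt11 (k : Type) [Field k] (C : Type) [AddCommGroup C] [Module k C]
    [Coalgebra k C]
    -- a comodule `(V, ρ)` over `C`:
    (V : Type) [AddCommGroup V] [Module k V] (ρ : V →ₗ[k] V ⊗[k] C)
    (hcounit : ∀ v : V,
      (TensorProduct.rid k V) (LinearMap.lTensor V (Coalgebra.counit (R := k)) (ρ v)) = v)
    (hcoassoc : ∀ v : V, (TensorProduct.assoc k V C C) (LinearMap.rTensor C ρ (ρ v))
      = LinearMap.lTensor V (Coalgebra.comul (R := k)) (ρ v)) :
    -- the set of finite-dimensional subcomodules of `V`: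
    let S : Set (Submodule k V) := {W | FiniteDimensional k W ∧
      ∀ w ∈ W, ρ w ∈ LinearMap.range (LinearMap.rTensor C W.subtype)}
    -- every element lies in a finite-dimensional subcomodule,
    (∀ v : V, ∃ W ∈ S, v ∈ W) ∧
    -- the finite-dimensional subcomodules are directed, and their union is everything
    DirectedOn (· ≤ ·) S ∧ sSup S = ⊤ := by
  intro S
  classical
  have main : ∀ v : V, ∃ W ∈ S, v ∈ W := by
    intro v
    set b : Module.Basis (Module.Basis.ofVectorSpaceIndex k C) k C := Module.Basis.ofVectorSpace k C with hb
    set F := auxE b (ρ v) with hF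
    set W : Submodule k V := Submodule.span k (insert v ↑(F.support.image F)) with hWdef
    have hvW : v ∈ W := Submodule.subset_span (Set.mem_insert _ _)
    have hW : ∀ j ∈ F.support, F j ∈ W := fun j hj =>
      Submodule.subset_span (Set.mem_insert_iff.mpr
        (Or.inr (Finset.mem_coe.mpr (Finset.mem_image_of_mem F hj))))
    have hfin : FiniteDimensional k W :=
      FiniteDimensional.span_of_finite k ((Finset.finite_toSet _).insert v)
    have hgen : ∀ g : C →ₗ[k] C,
        lTensor V g (ρ v) ∈ LinearMap.range (rTensor C W.subtype) :=
      fun g => auxMem b W g (ρ v) hW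
    refine ⟨W, ⟨hfin, ?_⟩, hvW⟩
    intro w hw
    have hle : W ≤ (LinearMap.range (rTensor C W.subtype)).comap ρ := by
      rw [Submodule.span_le]
      rintro x hx
      rcases Set.mem_insert_iff.mp hx with rfl | hx
      · have := hgen LinearMap.id
        simpa using this
      · obtain ⟨j, hj, rfl⟩ := Finset.mem_image.mp (Finset.mem_coe.mp hx)
        have h1 : ρ (F j) = lTensor V ((auxR (X := C) b j) ∘ₗ (Coalgebra.comul (R := k)))
            (ρ v) := by
          calc ρ (F j) = ρ (auxR b j (ρ v)) := by rw [auxR_apply]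
          _ = auxR b j (rTensor C ρ (ρ v)) := (auxR_natural b ρ j (ρ v)).symm
          _ = lTensor V (auxR (X := C) b j)
                (TensorProduct.assoc k V C C (rTensor C ρ (ρ v))) := (auxR_assoc b j _).symm
          _ = lTensor V (auxR (X := C) b j)
                (lTensor V (Coalgebra.comul (R := k)) (ρ v)) := by rw [hcoassoc]
          _ = lTensor V ((auxR (X := C) b j) ∘ₗ (Coalgebra.comul (R := k))) (ρ v) := by
                rw [lTensor_comp, LinearMap.comp_apply]
        simpa [Submodule.mem_comap, h1] using hgen ((auxR (X := C) b j) ∘ₗ _)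
    exact hle hw
  refine ⟨main, ?_, ?_⟩
  · rintro W₁ ⟨h1f, h1c⟩ W₂ ⟨h2f, h2c⟩
    refine ⟨W₁ ⊔ W₂, ⟨?_, ?_⟩, le_sup_left, le_sup_right⟩
    · exact Submodule.finiteDimensional_sup W₁ W₂
    · intro w hw
      obtain ⟨x, hx, y, hy, rfl⟩ := Submodule.mem_sup.mp hw
      rw [map_add]
      exact Submodule.add_mem _
        (range_rTensor_mono le_sup_left (h1c x hx))
        (range_rTensor_mono le_sup_right (h2c y hy))
  · rw [eq_top_iff]
    intro v _
    obtain ⟨W, hWS, hvW⟩ := main v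
    exact Submodule.mem_sSup_of_mem hWS hvW
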